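/- The function η(x) = e^{−(2x³/3 + x²)/c} ∫_{−∞}^x e^{(2x'³/3 + x'²)/c} dx', with c = τ(A+2B) > 0, is well-defined (the integral converges), strictly positive, and satisfies η(x) = O(x^{−2}) as |x| → ∞; more precisely x²η(x) → c/2 as x → +∞ and as x → −∞. -/

import Mathlib

open MeasureTheory Filter

/-- The (unnormalized) invariant density of the 1d dispersion process. -/
noncomputable def invDensity (c : ℝ) (x : ℝ) : ℝ :=
  Real.exp (-(2 * x ^ 3 / 3 + x ^ 2) / c) *
    ∫ t in Set.Iic x, Real.exp ((2 * t ^ 3 / 3 + t ^ 2) / c)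

namespace IDAux
open Set



noncomputable def V (c t : ℝ) : ℝ := (2 * t ^ 3 / 3 + t ^ 2) / c
noncomputable def g (c t : ℝ) : ℝ := Real.exp (V c t)

lemma gpos (c t : ℝ) : 0 < g c t := Real.exp_pos _

lemma contg (c : ℝ) : Continuous (g c) := by
  unfold g V; fun_prop

lemma hVderiv (c t : ℝ) : HasDerivAt (V c) ((2 * t ^ 2 + 2 * t) / c) t := by
  have h : HasDerivAt (fun t : ℝ => 2 * t ^ 3 / 3 + t ^ 2) (2 * t ^ 2 + 2 * t) t := by
    have h1 := (hasDerivAt_pow 3 t)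
    have h2 := (hasDerivAt_pow 2 t)
    have := ((h1.const_mul 2).div_const 3).add h2
    exact this.congr_deriv (by push_cast; ring)
  exact h.div_const c

lemma hgderiv (c t : ℝ) : HasDerivAt (g c) (g c t * ((2 * t ^ 2 + 2 * t) / c)) t :=
  (hVderiv c t).exp

lemma hVle {c t : ℝ} (hc0 : 0 < c) (ht : t ≤ -3 * (1 + c)) : V c t ≤ t := by
  rw [V, div_le_iff₀ hc0]
  nlinarith [sq_nonneg t, sq_nonneg (t + 1), sq_nonneg c, mul_pos hc0 hc0]

lemma intg {c : ℝ} (hc0 : 0 < c) (x : ℝ) : IntegrableOn (g c) (Iic x) := by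
  set b := min x (-3 * (1 + c)) with hb
  have hbx : b ≤ x := min_le_left _ _
  have h1 : IntegrableOn (g c) (Iic b) := by
    apply Integrable.mono (integrableOn_exp_Iic b) ((contg c).aestronglyMeasurable.restrict)
    filter_upwards [ae_restrict_mem measurableSet_Iic] with t ht
    rw [Real.norm_eq_abs, Real.norm_eq_abs, abs_of_pos (gpos c t),
      abs_of_pos (Real.exp_pos t)]
    exact Real.exp_le_exp.2 (hVle hc0 (le_trans ht (min_le_right _ _)))
  have h2 : IntegrableOn (g c) (Ioc b x) := (contg c).integrableOn_Ioc
  have := h1.union h2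
  rwa [Iic_union_Ioc_eq_Iic hbx] at this

noncomputable def F (c x : ℝ) : ℝ := ∫ t in Iic x, g c t
lemma contgV (c : ℝ) : Continuous (fun t => g c t * ((2 * t ^ 2 + 2 * t) / c)) := by
  unfold g V; fun_prop

lemma ftc (c a b : ℝ) :
    ∫ t in a..b, g c t * ((2 * t ^ 2 + 2 * t) / c) = g c b - g c a :=
  intervalIntegral.integral_eq_sub_of_hasDerivAt (fun t _ => hgderiv c t)
    ((contgV c).intervalIntegrable _ _)

lemma key_le {c a b m : ℝ} (hab : a ≤ b) (hm : 0 < m)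
    (h : ∀ t ∈ Icc a b, m ≤ (2 * t ^ 2 + 2 * t) / c) :
    ∫ t in a..b, g c t ≤ (g c b - g c a) / m := by
  rw [le_div_iff₀ hm]
  have h1 : ∫ t in a..b, m * g c t ≤ ∫ t in a..b, g c t * ((2 * t ^ 2 + 2 * t) / c) := by
    apply intervalIntegral.integral_mono_on hab
      ((continuous_const.mul (contg c)).intervalIntegrable _ _)
      ((contgV c).intervalIntegrable _ _)
    intro t ht
    have := h t ht
    simp only [Pi.mul_apply]
    nlinarith [gpos c t]
  rw [intervalIntegral.integral_const_mul, ftc] at h1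
  linarith

lemma key_ge {c a b M : ℝ} (hab : a ≤ b) (hM : 0 < M)
    (h : ∀ t ∈ Icc a b, (2 * t ^ 2 + 2 * t) / c ≤ M) :
    (g c b - g c a) / M ≤ ∫ t in a..b, g c t := by
  rw [div_le_iff₀ hM]
  have h1 : ∫ t in a..b, g c t * ((2 * t ^ 2 + 2 * t) / c) ≤ ∫ t in a..b, M * g c t := by
    apply intervalIntegral.integral_mono_on hab
      ((contgV c).intervalIntegrable _ _)
      ((continuous_const.mul (contg c)).intervalIntegrable _ _)
    intro t ht
    have := h t ht
    simp only [Pi.mul_apply]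
    nlinarith [gpos c t]
  rw [intervalIntegral.integral_const_mul, ftc] at h1
  linarith

lemma const_ub {c a b : ℝ} (hc0 : 0 < c) (ha : 0 ≤ a) (hab : a ≤ b) :
    ∫ t in a..b, g c t ≤ (b - a) * g c b := by
  have h1 : ∫ t in a..b, g c t ≤ ∫ _t in a..b, g c b := by
    apply intervalIntegral.integral_mono_on hab ((contg c).intervalIntegrable _ _)
      (intervalIntegrable_const)
    intro t ht
    apply Real.exp_le_exp.2
    unfold V
    gcongr
    all_goals first | exact ht.2 | exact le_trans ha ht.1
  simpa [intervalIntegral.integral_const, smul_eq_mul] using h1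

lemma rat_lim (c a : ℝ) {l : Filter ℝ} (h0 : Tendsto (fun x : ℝ => 1 / x) l (nhds 0))
    (hne : ∀ᶠ x in l, x ≠ 0) :
    Tendsto (fun x => c * x ^ 2 / (2 * (x + a) ^ 2 + 2 * (x + a))) l (nhds (c / 2)) := by
  have hd : Tendsto (fun x : ℝ => 2 * (1 + a * (1 / x)) ^ 2 + (2 * (1 / x) + 2 * a * (1 / x) ^ 2))
      l (nhds (2 * (1 + a * 0) ^ 2 + (2 * 0 + 2 * a * 0 ^ 2))) := by
    exact (((tendsto_const_nhds.add (h0.const_mul a)).pow 2).const_mul 2).add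
      ((h0.const_mul 2).add ((h0.pow 2).const_mul (2 * a)))
  have hd2 : Tendsto (fun x : ℝ => 2 * (1 + a * (1 / x)) ^ 2 + (2 * (1 / x) + 2 * a * (1 / x) ^ 2))
      l (nhds 2) := by convert hd using 2; norm_num
  have key : Tendsto
      (fun x : ℝ => c / (2 * (1 + a * (1 / x)) ^ 2 + (2 * (1 / x) + 2 * a * (1 / x) ^ 2)))
      l (nhds (c / 2)) := tendsto_const_nhds.div hd2 two_ne_zero
  apply key.congr'
  filter_upwards [hne] with x hx
  have hx2 : x ^ 2 ≠ 0 := pow_ne_zero _ hx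
  have hD : 2 * (x + a) ^ 2 + 2 * (x + a)
      = x ^ 2 * (2 * (1 + a * (1 / x)) ^ 2 + (2 * (1 / x) + 2 * a * (1 / x) ^ 2)) := by
    field_simp
  rw [hD, show c * x ^ 2 = x ^ 2 * c by ring, mul_div_mul_left _ _ hx2]

lemma ratTop0 (c : ℝ) : Tendsto (fun x : ℝ => c * x ^ 2 / (2 * x ^ 2 + 2 * x)) atTop (nhds (c / 2)) := by
  have := rat_lim c 0 (l := atTop) (by simpa [one_div] using tendsto_inv_atTop_zero)
    (eventually_ge_atTop 1 |>.mono fun x hx => by linarith)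
  simpa using this

lemma ratTop1 (c : ℝ) : Tendsto (fun x : ℝ => c * x ^ 2 / (2 * (x - 1) ^ 2 + 2 * (x - 1))) atTop (nhds (c / 2)) := by
  have := rat_lim c (-1) (l := atTop) (by simpa [one_div] using tendsto_inv_atTop_zero)
    (eventually_ge_atTop 1 |>.mono fun x hx => by linarith)
  simpa [sub_eq_add_neg] using this

lemma invBot : Tendsto (fun x : ℝ => 1 / x) atBot (nhds 0) := by
  have h : Tendsto (fun x : ℝ => -x) atBot atTop := tendsto_neg_atBot_atTop
  have h2 : Tendsto (fun x : ℝ => (-x)⁻¹) atBot (nhds 0) := tendsto_inv_atTop_zero.comp h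
  have h3 := h2.neg
  rw [neg_zero] at h3
  apply h3.congr
  intro x; rw [inv_neg, neg_neg, one_div]

lemma ratBot0 (c : ℝ) : Tendsto (fun x : ℝ => c * x ^ 2 / (2 * x ^ 2 + 2 * x)) atBot (nhds (c / 2)) := by
  have := rat_lim c 0 (l := atBot) (invBot)
    (eventually_le_atBot (-1) |>.mono fun x hx => by intro h; rw [h] at hx; linarith)
  simpa using this

lemma ratBot1 (c : ℝ) : Tendsto (fun x : ℝ => c * x ^ 2 / (2 * (x - 1) ^ 2 + 2 * (x - 1))) atBot (nhds (c / 2)) := by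
  have := rat_lim c (-1) (l := atBot) (invBot)
    (eventually_le_atBot (-1) |>.mono fun x hx => by linarith)
  simpa [sub_eq_add_neg] using this

lemma limV {c : ℝ} (hc0 : 0 < c) : Tendsto (fun x => Real.exp (-V c x)) atTop (nhds 0) := by
  apply Real.tendsto_exp_atBot.comp
  apply tendsto_neg_atTop_atBot.comp
  apply tendsto_atTop_mono' _ _ tendsto_id
  filter_upwards [eventually_ge_atTop (max c 1)] with x hx
  have h1 : (1:ℝ) ≤ x := le_trans (le_max_right _ _) hx
  have h2 : c ≤ x := le_trans (le_max_left _ _) hx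
  simp only [id_eq]
  rw [V, le_div_iff₀ hc0]
  nlinarith [mul_le_mul_of_nonneg_left h2 (by linarith : (0:ℝ) ≤ x)]

lemma lim1 {c : ℝ} (hc0 : 0 < c) :
    Tendsto (fun x => x ^ 2 * Real.exp (-V c x)) atTop (nhds 0) := by
  apply tendsto_of_tendsto_of_tendsto_of_le_of_le' tendsto_const_nhds
    (Real.tendsto_pow_mul_exp_neg_atTop_nhds_zero 2)
  · filter_upwards with x; positivity
  · filter_upwards [eventually_ge_atTop (max c 1)] with x hx
    have h1 : (1:ℝ) ≤ x := le_trans (le_max_right _ _) hx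
    have h2 : c ≤ x := le_trans (le_max_left _ _) hx
    have hV : x ≤ V c x := by rw [V, le_div_iff₀ hc0]; nlinarith
    exact mul_le_mul_of_nonneg_left (Real.exp_le_exp.2 (neg_le_neg hV)) (sq_nonneg x)

lemma lim2 {c : ℝ} (hc0 : 0 < c) :
    Tendsto (fun x => x ^ 2 * (x - 1) * Real.exp (-((2 * x ^ 2 - 1 / 3) / c))) atTop (nhds 0) := by
  apply tendsto_of_tendsto_of_tendsto_of_le_of_le' tendsto_const_nhds
    (Real.tendsto_pow_mul_exp_neg_atTop_nhds_zero 3)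
  · filter_upwards [eventually_ge_atTop 1] with x hx
    exact mul_nonneg (mul_nonneg (sq_nonneg x) (by linarith)) (Real.exp_pos _).le
  · filter_upwards [eventually_ge_atTop (max c 1)] with x hx
    have h1 : (1:ℝ) ≤ x := le_trans (le_max_right _ _) hx
    have h2 : c ≤ x := le_trans (le_max_left _ _) hx
    have hV : x ≤ (2 * x ^ 2 - 1 / 3) / c := by rw [le_div_iff₀ hc0]; nlinarith
    have hE := Real.exp_le_exp.2 (neg_le_neg hV)
    have h3 : x ^ 2 * (x - 1) ≤ x ^ 3 := by nlinarith
    have h4 : (0:ℝ) ≤ x ^ 2 * (x - 1) := by nlinarith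
    exact mul_le_mul h3 hE (Real.exp_pos _).le (by nlinarith)

lemma lim3 {c : ℝ} (hc0 : 0 < c) :
    Tendsto (fun x : ℝ => Real.exp (-((2 * x ^ 2 - 1 / 3) / c))) atBot (nhds 0) := by
  apply Real.tendsto_exp_atBot.comp
  apply tendsto_neg_atTop_atBot.comp
  apply Tendsto.atTop_div_const hc0
  apply tendsto_atTop_add_const_right _ (-(1/3) : ℝ)
  have h2 : Tendsto (fun x : ℝ => x ^ 2) atBot atTop := by
    apply tendsto_atTop_mono' _ _ tendsto_neg_atBot_atTop
    filter_upwards [eventually_le_atBot (-1 : ℝ)] with x hx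
    nlinarith
  have := h2.const_mul_atTop (show (0:ℝ) < 2 by norm_num)
  simpa [sub_eq_add_neg] using this.congr fun x => by ring

-- new material
lemma gzero (c : ℝ) : g c 0 = 1 := by simp [g, V]

lemma hEg (c x : ℝ) : Real.exp (-V c x) * g c x = 1 := by
  rw [g, ← Real.exp_add]; simp

lemma Vdiff {c : ℝ} (hc0 : 0 < c) (x : ℝ) :
    Real.exp (-V c x) * g c (x - 1) = Real.exp (-((2 * x ^ 2 - 1 / 3) / c)) := by
  rw [g, ← Real.exp_add]
  congr 1
  rw [V, V]
  field_simp
  ring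

lemma interval_le_F {c : ℝ} (hc0 : 0 < c) {a x : ℝ} (hax : a ≤ x) :
    ∫ t in a..x, g c t ≤ F c x := by
  rw [intervalIntegral.integral_of_le hax]
  apply setIntegral_mono_set (intg hc0 x)
  · filter_upwards with t using (gpos c t).le
  · exact HasSubset.Subset.eventuallyLE Ioc_subset_Iic_self

lemma F_split {c : ℝ} (hc0 : 0 < c) {x : ℝ} (hx : 0 ≤ x) :
    F c x = F c 0 + ∫ t in (0:ℝ)..x, g c t := by
  have h : Iic x = Iic (0:ℝ) ∪ Ioc 0 x := (Iic_union_Ioc_eq_Iic hx).symm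
  rw [intervalIntegral.integral_of_le hx, F, h,
    setIntegral_union (Iic_disjoint_Ioc le_rfl) measurableSet_Ioc (intg hc0 0)
      ((contg c).integrableOn_Ioc), F]

lemma F_pos {c : ℝ} (hc0 : 0 < c) (x : ℝ) : 0 < F c x := by
  have h1 : 0 < ∫ t in (x-1)..x, g c t :=
    intervalIntegral.intervalIntegral_pos_of_pos ((contg c).intervalIntegrable _ _)
      (fun t => gpos c t) (by linarith)
  linarith [interval_le_F hc0 (by linarith : x - 1 ≤ x)]

lemma F_tendsto {c : ℝ} (hc0 : 0 < c) (x : ℝ) :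
    Tendsto (fun y => ∫ t in y..x, g c t) atBot (nhds (F c x)) :=
  intervalIntegral_tendsto_integral_Iic x (intg hc0 x) tendsto_id

lemma top {c : ℝ} (hc0 : 0 < c) :
    Tendsto (fun x => x ^ 2 * (Real.exp (-V c x) * F c x)) atTop (nhds (c / 2)) := by
  have hlow : Tendsto (fun x => (1 - Real.exp (-V c x)) * (c * x ^ 2 / (2 * x ^ 2 + 2 * x)))
      atTop (nhds (c / 2)) := by
    have := ((tendsto_const_nhds : Tendsto (fun _ : ℝ => (1:ℝ)) atTop (nhds 1)).sub (limV hc0)).mul (ratTop0 c)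
    simpa using this
  have hup : Tendsto (fun x => x ^ 2 * Real.exp (-V c x) * F c 0
      + x ^ 2 * (x - 1) * Real.exp (-((2 * x ^ 2 - 1 / 3) / c))
      + c * x ^ 2 / (2 * (x - 1) ^ 2 + 2 * (x - 1))) atTop (nhds (c / 2)) := by
    have := (((lim1 hc0).mul_const (F c 0)).add (lim2 hc0)).add (ratTop1 c)
    simpa using this
  apply tendsto_of_tendsto_of_tendsto_of_le_of_le' hlow hup
  · filter_upwards [eventually_ge_atTop 2] with x hx2
    have hx0 : (0:ℝ) ≤ x := by linarith
    have hD : (0:ℝ) < 2 * x ^ 2 + 2 * x := by nlinarith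
    have hM : (0:ℝ) < (2 * x ^ 2 + 2 * x) / c := div_pos hD hc0
    have hkey : (g c x - g c 0) / ((2 * x ^ 2 + 2 * x) / c) ≤ ∫ t in (0:ℝ)..x, g c t :=
      key_ge hx0 hM (fun t ht => div_le_div_of_nonneg_right (by nlinarith [ht.1, ht.2]) hc0.le)
    have hFge : (g c x - 1) / ((2 * x ^ 2 + 2 * x) / c) ≤ F c x := by
      rw [gzero] at hkey; exact le_trans hkey (interval_le_F hc0 hx0)
    have hE : (0:ℝ) < Real.exp (-V c x) := Real.exp_pos _
    have step : x ^ 2 * (Real.exp (-V c x) * ((g c x - 1) / ((2 * x ^ 2 + 2 * x) / c)))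
        ≤ x ^ 2 * (Real.exp (-V c x) * F c x) :=
      mul_le_mul_of_nonneg_left (mul_le_mul_of_nonneg_left hFge hE.le) (sq_nonneg x)
    refine le_trans (le_of_eq ?_) step
    have e1 : Real.exp (-V c x) * (g c x - 1) = 1 - Real.exp (-V c x) := by
      rw [mul_sub, hEg c x, mul_one]
    rw [div_div_eq_mul_div, ← e1]
    ring
  · filter_upwards [eventually_ge_atTop 2] with x hx2
    have hDm : (0:ℝ) < 2 * (x - 1) ^ 2 + 2 * (x - 1) := by nlinarith
    have hm : (0:ℝ) < (2 * (x - 1) ^ 2 + 2 * (x - 1)) / c := div_pos hDm hc0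
    have hsplit : F c x = F c 0 + ∫ t in (0:ℝ)..x, g c t := F_split hc0 (by linarith)
    have hadj : ∫ t in (0:ℝ)..x, g c t
        = (∫ t in (0:ℝ)..(x - 1), g c t) + ∫ t in (x - 1)..x, g c t :=
      (intervalIntegral.integral_add_adjacent_intervals ((contg c).intervalIntegrable _ _)
        ((contg c).intervalIntegrable _ _)).symm
    have h1 : ∫ t in (0:ℝ)..(x - 1), g c t ≤ (x - 1) * g c (x - 1) := by
      simpa using const_ub hc0 le_rfl (by linarith : (0:ℝ) ≤ x - 1)
    have h2 : ∫ t in (x - 1)..x, g c t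
        ≤ (g c x - g c (x - 1)) / ((2 * (x - 1) ^ 2 + 2 * (x - 1)) / c) :=
      key_le (by linarith) hm (fun t ht =>
        div_le_div_of_nonneg_right (by nlinarith [ht.1, ht.2]) hc0.le)
    have h2' : ∫ t in (x - 1)..x, g c t ≤ g c x / ((2 * (x - 1) ^ 2 + 2 * (x - 1)) / c) :=
      le_trans h2 (div_le_div_of_nonneg_right (by linarith [gpos c (x - 1)]) hm.le)
    have hFle : F c x ≤ F c 0 + ((x - 1) * g c (x - 1)
        + g c x / ((2 * (x - 1) ^ 2 + 2 * (x - 1)) / c)) := by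
      rw [hsplit, hadj]; linarith
    have hE : (0:ℝ) < Real.exp (-V c x) := Real.exp_pos _
    have step : x ^ 2 * (Real.exp (-V c x) * F c x)
        ≤ x ^ 2 * (Real.exp (-V c x) * (F c 0 + ((x - 1) * g c (x - 1)
          + g c x / ((2 * (x - 1) ^ 2 + 2 * (x - 1)) / c)))) :=
      mul_le_mul_of_nonneg_left (mul_le_mul_of_nonneg_left hFle hE.le) (sq_nonneg x)
    refine le_trans step (le_of_eq ?_)
    have e2 := Vdiff hc0 x
    have e3 := hEg c x
    rw [div_div_eq_mul_div]
    linear_combination (x ^ 2 * (x - 1)) * e2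
      + (x ^ 2 * c / (2 * (x - 1) ^ 2 + 2 * (x - 1))) * e3

lemma bot {c : ℝ} (hc0 : 0 < c) :
    Tendsto (fun x => x ^ 2 * (Real.exp (-V c x) * F c x)) atBot (nhds (c / 2)) := by
  have hlow : Tendsto (fun x => (1 - Real.exp (-((2 * x ^ 2 - 1 / 3) / c)))
      * (c * x ^ 2 / (2 * (x - 1) ^ 2 + 2 * (x - 1)))) atBot (nhds (c / 2)) := by
    have := ((tendsto_const_nhds : Tendsto (fun _ : ℝ => (1:ℝ)) atBot (nhds 1)).sub (lim3 hc0)).mul (ratBot1 c)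
    simpa using this
  have hup := ratBot0 c
  apply tendsto_of_tendsto_of_tendsto_of_le_of_le' hlow hup
  · filter_upwards [eventually_le_atBot (-2 : ℝ)] with x hx2
    have hDm : (0:ℝ) < 2 * (x - 1) ^ 2 + 2 * (x - 1) := by nlinarith
    have hm : (0:ℝ) < (2 * (x - 1) ^ 2 + 2 * (x - 1)) / c := div_pos hDm hc0
    have hkey : (g c x - g c (x - 1)) / ((2 * (x - 1) ^ 2 + 2 * (x - 1)) / c)
        ≤ ∫ t in (x - 1)..x, g c t := by
      apply key_ge (by linarith) hm
      intro t ht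
      apply div_le_div_of_nonneg_right _ hc0.le
      have hh := mul_nonneg (show (0:ℝ) ≤ t - (x - 1) by linarith [ht.1])
        (show (0:ℝ) ≤ -(t + x) by linarith [ht.2])
      nlinarith [hh]
    have hFge : (g c x - g c (x - 1)) / ((2 * (x - 1) ^ 2 + 2 * (x - 1)) / c) ≤ F c x :=
      le_trans hkey (interval_le_F hc0 (by linarith))
    have hE : (0:ℝ) < Real.exp (-V c x) := Real.exp_pos _
    have step : x ^ 2 * (Real.exp (-V c x)
          * ((g c x - g c (x - 1)) / ((2 * (x - 1) ^ 2 + 2 * (x - 1)) / c)))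
        ≤ x ^ 2 * (Real.exp (-V c x) * F c x) :=
      mul_le_mul_of_nonneg_left (mul_le_mul_of_nonneg_left hFge hE.le) (sq_nonneg x)
    refine le_trans (le_of_eq ?_) step
    have e4 : Real.exp (-V c x) * (g c x - g c (x - 1))
        = 1 - Real.exp (-((2 * x ^ 2 - 1 / 3) / c)) := by
      rw [mul_sub, hEg c x, Vdiff hc0 x]
    rw [div_div_eq_mul_div, ← e4]
    ring
  · filter_upwards [eventually_le_atBot (-2 : ℝ)] with x hx2
    have hD : (0:ℝ) < 2 * x ^ 2 + 2 * x := by nlinarith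
    have hM : (0:ℝ) < (2 * x ^ 2 + 2 * x) / c := div_pos hD hc0
    have hFle : F c x ≤ g c x / ((2 * x ^ 2 + 2 * x) / c) := by
      apply le_of_tendsto (F_tendsto hc0 x)
      filter_upwards [eventually_le_atBot x] with y hy
      have hk : ∫ t in y..x, g c t ≤ (g c x - g c y) / ((2 * x ^ 2 + 2 * x) / c) := by
        apply key_le hy hM
        intro t ht
        apply div_le_div_of_nonneg_right _ hc0.le
        have hh := mul_nonneg (show (0:ℝ) ≤ x - t by linarith [ht.2])
          (show (0:ℝ) ≤ -(t + x + 1) by linarith [ht.2])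
        nlinarith [hh]
      exact le_trans hk (div_le_div_of_nonneg_right (by linarith [gpos c y]) hM.le)
    have hE : (0:ℝ) < Real.exp (-V c x) := Real.exp_pos _
    have step : x ^ 2 * (Real.exp (-V c x) * F c x)
        ≤ x ^ 2 * (Real.exp (-V c x) * (g c x / ((2 * x ^ 2 + 2 * x) / c))) :=
      mul_le_mul_of_nonneg_left (mul_le_mul_of_nonneg_left hFle hE.le) (sq_nonneg x)
    refine le_trans step (le_of_eq ?_)
    rw [div_div_eq_mul_div]
    linear_combination (x ^ 2 * c / (2 * x ^ 2 + 2 * x)) * (hEg c x)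

end IDAux

/-- the density `η` is well defined (the integral converges),
strictly positive, and satisfies `x² η(x) → c/2` as `x → ±∞`; in particular
`η(x) = O(x^{−2})` at infinity. -/
theorem invDensity_tails (τ A B : ℝ) (hτ : 0 < τ) (hAB : 0 < A + 2 * B)
    (c : ℝ) (hc : c = τ * (A + 2 * B)) :
    (∀ x : ℝ, IntegrableOn
      (fun t => Real.exp ((2 * t ^ 3 / 3 + t ^ 2) / c)) (Set.Iic x)) ∧
    (∀ x : ℝ, 0 < invDensity c x) ∧
    Tendsto (fun x : ℝ => x ^ 2 * invDensity c x) atTop (nhds (c / 2)) ∧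
    Tendsto (fun x : ℝ => x ^ 2 * invDensity c x) atBot (nhds (c / 2)) := by
  have hc0 : 0 < c := by rw [hc]; positivity
  have heq : ∀ x : ℝ, invDensity c x = Real.exp (-IDAux.V c x) * IDAux.F c x := by
    intro x
    simp only [invDensity, IDAux.F, IDAux.g, IDAux.V, neg_div]
  refine ⟨fun x => IDAux.intg hc0 x, fun x => ?_, ?_, ?_⟩
  · rw [heq]
    exact mul_pos (Real.exp_pos _) (IDAux.F_pos hc0 x)
  · simp only [heq]
    exact IDAux.top hc0
  · simp only [heq]
    exact IDAux.bot hc0
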